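/- Let a₁,…,aₙ ∈ ℤ^d generate ℤ^d, let A be the matrix with rows aᵢ, and let w₁,…,w_{n-d} be a ℤ-basis of ker(Aᵀ) ⊆ ℤⁿ. Let φ̌ : ℤ[x₁^±,…,xₙ^±] → ℤ[s₁^±,…,s_d^±] be the homomorphism xₖ ↦ s^{aₖ}, and let J be the ideal generated by the Laurent polynomials x^{wᵢ} - 1 for i = 1,…,n-d. Then ker φ̌ = J. -/

import Mathlib

/-- The Laurent polynomial ring in variables indexed by `ι` over `ℤ`. -/
abbrev LaurentRing (ι : Type) : Type := AddMonoidAlgebra ℤ (ι → ℤ)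

/-- The monomial `x^ν` in the Laurent polynomial ring. -/
noncomputable def laurentMonomial {ι : Type} (ν : ι → ℤ) : LaurentRing ι :=
  AddMonoidAlgebra.single ν (1 : ℤ)

lemma laurentMonomial_mul {ι : Type} (x y : ι → ℤ) :
    laurentMonomial x * laurentMonomial y = laurentMonomial (x + y) := by
  simp [laurentMonomial, AddMonoidAlgebra.single_mul_single]

lemma laurentMonomial_zero {ι : Type} : laurentMonomial (0 : ι → ℤ) = 1 := rfl

theorem kernel_of_monomial_map_eq_binomial_ideal
    (n d : ℕ) (a : Fin n → Fin d → ℤ)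
    (hgen : Submodule.span ℤ (Set.range a) = (⊤ : Submodule ℤ (Fin d → ℤ)))
    (w : Fin (n - d) → (Fin n → ℤ))
    (hw : LinearIndependent ℤ w)
    (hker : Submodule.span ℤ (Set.range w) =
      LinearMap.ker (Matrix.toLin' (Matrix.of fun (k : Fin d) (i : Fin n) => a i k)))
    (φ : LaurentRing (Fin n) →ₐ[ℤ] LaurentRing (Fin d))
    (hφ : ∀ ν : Fin n → ℤ,
      φ (laurentMonomial ν) = laurentMonomial (fun k => ∑ i, ν i * a i k)) :
    RingHom.ker (φ : LaurentRing (Fin n) →+* LaurentRing (Fin d)) =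
      Ideal.span (Set.range fun i => laurentMonomial (w i) - 1) := by
  set F := Matrix.toLin' (Matrix.of fun (k : Fin d) (i : Fin n) => a i k) with hFdef
  have hF : ∀ ν : Fin n → ℤ, F ν = fun k => ∑ i, ν i * a i k := by
    intro ν; ext k
    simp [hFdef, Matrix.toLin'_apply, Matrix.mulVec, dotProduct, mul_comm]
  set J := Ideal.span (Set.range fun i => laurentMonomial (w i) - 1) with hJ
  -- monomials of kernel elements are ≡ 1 mod J
  have hneg : ∀ x : Fin n → ℤ, laurentMonomial x - 1 ∈ J →
      laurentMonomial (-x) - 1 ∈ J := by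
    intro x hx
    have h : laurentMonomial (-x) - 1
        = -(laurentMonomial (-x) * (laurentMonomial x - 1)) := by
      rw [mul_sub, laurentMonomial_mul, neg_add_cancel, laurentMonomial_zero]; ring
    rw [h]; exact neg_mem (Ideal.mul_mem_left _ _ hx)
  have hadd : ∀ x y : Fin n → ℤ, laurentMonomial x - 1 ∈ J → laurentMonomial y - 1 ∈ J →
      laurentMonomial (x + y) - 1 ∈ J := by
    intro x y hx hy
    have h : laurentMonomial (x + y) - 1
        = laurentMonomial x * (laurentMonomial y - 1) + (laurentMonomial x - 1) := by
      rw [mul_sub, laurentMonomial_mul]; ring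
    rw [h]; exact add_mem (Ideal.mul_mem_left _ _ hy) hx
  have hK : ∀ k : Fin n → ℤ, F k = 0 → laurentMonomial k - 1 ∈ J := by
    intro k hk
    have hk' : k ∈ Submodule.span ℤ (Set.range w) := by
      rw [hker]; exact hk
    refine Submodule.span_induction ?_ ?_ ?_ ?_ hk'
    · rintro _ ⟨i, rfl⟩; exact Ideal.subset_span ⟨i, rfl⟩
    · simpa [laurentMonomial_zero] using (zero_mem J)
    · intro x y _ _ hx hy; exact hadd x y hx hy
    · intro c x _ hx
      induction c using Int.induction_on with
      | zero => simpa [laurentMonomial_zero] using (zero_mem J)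
      | succ m ih => rw [add_smul, one_smul]; exact hadd _ _ ih hx
      | pred m ih =>
          have h : (-(m:ℤ) - 1) • x = (-(m:ℤ)) • x + (-x) := by
            rw [sub_smul, one_smul, sub_eq_add_neg]
          rw [h]; exact hadd _ _ ih (hneg _ hx)
  -- surjectivity and section
  have hsurj : Function.Surjective F := by
    rw [← LinearMap.range_eq_top, ← top_le_iff, ← hgen, Submodule.span_le]
    rintro _ ⟨i, rfl⟩
    refine ⟨Pi.single i 1, ?_⟩
    rw [hF]; ext k
    simp [Pi.single_apply, ite_mul]
  obtain ⟨s, hs⟩ := Module.projective_lifting_property F LinearMap.id hsurj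
  have hsF : ∀ ν : Fin n → ℤ, F (ν - s (F ν)) = 0 := by
    intro ν
    have := LinearMap.congr_fun hs (F ν)
    simp only [LinearMap.comp_apply, LinearMap.id_apply] at this
    rw [map_sub, this, sub_self]
  have hB : ∀ ν : Fin n → ℤ,
      laurentMonomial ν - laurentMonomial (s (F ν)) ∈ J := by
    intro ν
    have h1 : laurentMonomial (ν - s (F ν)) - 1 ∈ J := hK _ (hsF ν)
    have h2 : laurentMonomial ν - laurentMonomial (s (F ν))
        = laurentMonomial (s (F ν)) * (laurentMonomial (ν - s (F ν)) - 1) := by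
      have h3 : s (F ν) + (ν - s (F ν)) = ν := by abel
      rw [mul_sub, laurentMonomial_mul, mul_one, h3]
    rw [h2]; exact Ideal.mul_mem_left _ _ h1
  -- φ is mapDomain F
  have hφm : ∀ (ν : Fin n → ℤ) (c : ℤ),
      φ (AddMonoidAlgebra.single ν c) = AddMonoidAlgebra.single (F ν) c := by
    intro ν c
    have h1 : (AddMonoidAlgebra.single ν c : LaurentRing (Fin n)) = c • laurentMonomial ν := by
      simp [laurentMonomial, AddMonoidAlgebra.smul_single]
    rw [h1, map_zsmul, hφ, ← hF]
    simp [laurentMonomial, AddMonoidAlgebra.smul_single]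
  set ψ : LaurentRing (Fin d) →ₐ[ℤ] LaurentRing (Fin n) :=
    AddMonoidAlgebra.mapDomainAlgHom ℤ ℤ s with hψ
  have hψm : ∀ (x : Fin d → ℤ) (c : ℤ),
      ψ (AddMonoidAlgebra.single x c) = AddMonoidAlgebra.single (s x) c := by
    intro x c
    simp [hψ, AddMonoidAlgebra.mapDomainAlgHom_apply, AddMonoidAlgebra.mapDomain_single]
  have haddJ : ∀ u v : LaurentRing (Fin n), u - ψ (φ u) ∈ J → v - ψ (φ v) ∈ J →
      (u + v) - ψ (φ (u + v)) ∈ J := by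
    intro u v hu hv
    have h : (u + v) - ψ (φ (u + v)) = (u - ψ (φ u)) + (v - ψ (φ v)) := by
      rw [map_add, map_add]; ring
    rw [h]; exact add_mem hu hv
  have key : ∀ q : LaurentRing (Fin n), q - ψ (φ q) ∈ J := by
    intro q
    induction q using AddMonoidAlgebra.induction_linear with
    | zero => simp
    | add f g hf hg => exact haddJ f g hf hg
    | single ν c =>
        rw [hφm, hψm]
        have h : (AddMonoidAlgebra.single ν c : LaurentRing (Fin n))
            - AddMonoidAlgebra.single (s (F ν)) c
            = c • (laurentMonomial ν - laurentMonomial (s (F ν))) := by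
          simp [laurentMonomial, smul_sub, AddMonoidAlgebra.smul_single]
        rw [h]; exact zsmul_mem (hB ν) c
  -- conclude
  ext p
  simp only [RingHom.mem_ker, ← hJ]
  constructor
  · intro hp
    rw [RingHom.coe_coe] at hp
    have h := key p
    rw [hp, map_zero, sub_zero] at h
    exact h
  · intro hp
    have hJle : J ≤ RingHom.ker (φ : LaurentRing (Fin n) →+* LaurentRing (Fin d)) := by
      rw [hJ, Ideal.span_le]
      rintro _ ⟨i, rfl⟩
      simp only [SetLike.mem_coe, RingHom.mem_ker]
      have hwi : F (w i) = 0 := by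
        have : w i ∈ Submodule.span ℤ (Set.range w) :=
          Submodule.subset_span ⟨i, rfl⟩
        rw [hker] at this
        exact this
      have : φ (laurentMonomial (w i)) = 1 := by
        rw [hφ, ← hF, hwi, laurentMonomial_zero]
      simp [map_sub, this]
    exact hJle hp
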